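/- Let f : (L,G) → (K,H) be a strong map between generator enriched lattices (a join-preserving map with f(G) ⊆ H ∪ {0̂_K}). Then the induced map F : M(L,G) → M(K,H) defined by F(⟨I|z⟩) = ⟨f(I)|f(z)⟩ (and F(∅) = ∅) is order-preserving on minor posets. -/
import Mathlib


open Finset

/-- A generator-enriched lattice datum inside an ambient lattice `L`:
a minimal element `z` together with a finite generating set of elements
strictly above `z`. The underlying set of elements consists of all joins
of `z` with subsets of the generating set. -/
structure GEL (L : Type*) [Lattice L] [DecidableEq L] where
  z : L
  gens : Finset L
  lt_gens : ∀ g ∈ gens, z < g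

namespace GEL

variable {L K : Type*} [Lattice L] [OrderBot L] [DecidableEq L]

/-- The underlying set of elements of a generator enriched lattice. -/
def carrier (M : GEL L) : Finset L :=
  M.gens.powerset.image fun X => X.sup id ⊔ M.z

/-- Deletion of a set of generators. -/
def delete (M : GEL L) (I : Finset L) : GEL L :=
  ⟨M.z, M.gens \ I, fun g hg => M.lt_gens g (Finset.mem_sdiff.mp hg).1⟩

/-- Restriction to a set of generators. -/
def restrict (M : GEL L) (I : Finset L) : GEL L :=
  M.delete (M.gens \ I)

/-- Contraction by a set of generators. -/
def contract (M : GEL L) (I : Finset L) : GEL L :=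
  ⟨I.sup id ⊔ M.z,
   (M.gens.image fun g => g ⊔ (I.sup id ⊔ M.z)).erase (I.sup id ⊔ M.z),
   fun g hg => by
     obtain ⟨hne, hg'⟩ := Finset.mem_erase.mp hg
     obtain ⟨h, -, rfl⟩ := Finset.mem_image.mp hg'
     exact lt_of_le_of_ne le_sup_right (Ne.symm hne)⟩

open Classical in
/-- Contraction by an element: contract by all generators below it. -/
noncomputable def contractEl (M : GEL L) (ℓ : L) : GEL L :=
  M.contract (M.gens.filter fun g => g ≤ ℓ)

/-- A single deletion or contraction step. -/
def Step (M N : GEL L) : Prop :=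
  ∃ I ⊆ M.gens, N = M.delete I ∨ N = M.contract I

/-- `Minor M N` : `N` is a minor of `M`, i.e. obtained from `M` by a finite
sequence of deletions and contractions. -/
def Minor (M N : GEL L) : Prop :=
  Relation.ReflTransGen Step M N

/-- The generator enriched lattice on a lattice with `⊥`, with the given generating set. -/
def ofGens (G : Finset L) (hG : ∀ g ∈ G, (⊥ : L) < g) : GEL L :=
  ⟨⊥, G, hG⟩

/-- The underlying type of the minor poset of `T`: all minors of `T`
together with an adjoined minimum `none`. -/
abbrev MP (T : GEL L) := Option {M : GEL L // T.Minor M}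

/-- The order relation of the minor poset. -/
def mple (T : GEL L) : MP T → MP T → Prop
  | none, _ => True
  | some _, none => False
  | some A, some B => B.1.Minor A.1

/-- The rank function of the minor poset. -/
def mrank (T : GEL L) : MP T → ℕ
  | none => 0
  | some A => A.1.gens.card + 1

/-- A parallel: an element `ℓ` and distinct generators `g, h` with
`g ⊔ ℓ = h ⊔ ℓ ≠ ℓ`. -/
def HasParallel (M : GEL L) : Prop :=
  ∃ ℓ ∈ M.carrier, ∃ g ∈ M.gens, ∃ h ∈ M.gens,
    g ≠ h ∧ g ⊔ ℓ = h ⊔ ℓ ∧ g ⊔ ℓ ≠ ℓ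

/-- Isomorphism of generator enriched lattices: a join-preserving bijection of the
underlying sets carrying the generating set onto the generating set. -/
def GIso [Lattice K] [OrderBot K] [DecidableEq K] (M : GEL L) (N : GEL K) : Prop :=
  ∃ f : L → K, Set.BijOn f ↑M.carrier ↑N.carrier ∧
    (∀ a ∈ M.carrier, ∀ b ∈ M.carrier, f (a ⊔ b) = f a ⊔ f b) ∧
    f '' ↑M.gens = ↑N.gens

open Classical in
/-- The image generator enriched lattice `⟨f(I) | f(z)⟩` of a strong map. -/
noncomputable def map [Lattice K] [DecidableEq K] (f : L → K) (M : GEL L) : GEL K :=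
  ⟨f M.z, (M.gens.image f).filter fun y => f M.z < y,
   fun g hg => (Finset.mem_filter.mp hg).2⟩

/-- `T` lifts join irreducibles: for every `ℓ` and generator `g` with `g ≰ ℓ`,
the element `g ⊔ ℓ` is join irreducible in the interval `[ℓ, ⊤]`. -/
def LiftsJI (T : GEL L) : Prop :=
  ∀ ℓ : L, ∀ g ∈ T.gens, ¬ g ≤ ℓ →
    ∀ a b : L, ℓ ≤ a → ℓ ≤ b → g ⊔ ℓ = a ⊔ b → g ⊔ ℓ = a ∨ g ⊔ ℓ = b

end GEL


namespace StrongMapAux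

set_option linter.unusedSectionVars false

open GEL

section
variable {L : Type*} [Lattice L] [DecidableEq L]

theorem GEL.ext' {M N : GEL L} (hz : M.z = N.z) (hg : M.gens = N.gens) : M = N := by
  cases M; cases N; simp_all

end

variable {L K : Type*} [Lattice L] [OrderBot L] [DecidableEq L]
  [Lattice K] [OrderBot K] [DecidableEq K]

variable (f : L → K) (hjoin : ∀ a b : L, f (a ⊔ b) = f a ⊔ f b)

include hjoin in
theorem fmono {a b : L} (h : a ≤ b) : f a ≤ f b := by
  have h2 : f (a ⊔ b) = f a ⊔ f b := hjoin a b
  rw [sup_eq_right.mpr h] at h2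
  rw [h2]; exact le_sup_left

include hjoin in
theorem map_sup_aux (I : Finset L) (x : L) :
    f (I.sup id ⊔ x) = (I.image f).sup id ⊔ f x := by
  classical
  induction I using Finset.induction_on with
  | empty => simp
  | @insert a s ha ih =>
      rw [Finset.sup_insert, Finset.image_insert, Finset.sup_insert, id, id,
        sup_assoc, hjoin, ih, ← sup_assoc]

open Classical in
theorem sup_filter_lt (S : Finset K) (c : K) (h : ∀ y ∈ S, ¬ c < y → y ≤ c) :
    ((S.filter fun y => c < y).sup id) ⊔ c = S.sup id ⊔ c := by
  apply le_antisymm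
  · exact sup_le_sup_right (Finset.sup_mono (Finset.filter_subset _ _)) c
  · refine sup_le (Finset.sup_le fun y hy => ?_) le_sup_right
    by_cases hc : c < y
    · exact le_sup_of_le_left (Finset.le_sup (f := id) (Finset.mem_filter.mpr ⟨hy, hc⟩))
    · exact le_sup_of_le_right (h y hy hc)

include hjoin in
theorem step_map {M N : GEL L} (h : GEL.Step M N) :
    GEL.Step (GEL.map f M) (GEL.map f N) := by
  classical
  obtain ⟨I, hI, hN | hN⟩ := h
  · -- deletion
    subst hN
    refine ⟨(GEL.map f M).gens \ (GEL.map f (M.delete I)).gens, Finset.sdiff_subset,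
      Or.inl ?_⟩
    have hsub : (GEL.map f (M.delete I)).gens ⊆ (GEL.map f M).gens := by
      intro y hy
      obtain ⟨hy1, hy2⟩ := Finset.mem_filter.mp hy
      obtain ⟨g, hg, rfl⟩ := Finset.mem_image.mp hy1
      exact Finset.mem_filter.mpr
        ⟨Finset.mem_image.mpr ⟨g, (Finset.mem_sdiff.mp hg).1, rfl⟩, hy2⟩
    refine GEL.ext' rfl ?_
    show (GEL.map f (M.delete I)).gens
      = (GEL.map f M).gens \ ((GEL.map f M).gens \ (GEL.map f (M.delete I)).gens)
    rw [Finset.sdiff_sdiff_self_left, Finset.inter_eq_right.mpr hsub]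
  · -- contraction
    subst hN
    set z' := I.sup id ⊔ M.z with hz'
    set J := (I.image f).filter (fun y => f M.z < y) with hJdef
    have hle : ∀ y ∈ I.image f, ¬ f M.z < y → y ≤ f M.z := by
      intro y hy hlt
      obtain ⟨g, hg, rfl⟩ := Finset.mem_image.mp hy
      have h1 : f M.z ≤ f g := fmono f hjoin (M.lt_gens g (hI hg)).le
      rcases eq_or_lt_of_le h1 with he | hl
      · exact he.ge
      · exact absurd hl hlt
    have hz : f z' = J.sup id ⊔ f M.z := by
      rw [hz', map_sup_aux f hjoin, hJdef, sup_filter_lt _ _ hle]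
    have hz2 : J.sup id ⊔ (GEL.map f M).z = f z' := hz.symm
    refine ⟨J, ?_, Or.inr ?_⟩
    · intro y hy
      obtain ⟨hy1, hy2⟩ := Finset.mem_filter.mp hy
      obtain ⟨g, hg, rfl⟩ := Finset.mem_image.mp hy1
      exact Finset.mem_filter.mpr ⟨Finset.mem_image.mpr ⟨g, hI hg, rfl⟩, hy2⟩
    · refine GEL.ext' hz ?_
      show (GEL.map f (M.contract I)).gens = ((GEL.map f M).contract J).gens
      ext x
      constructor
      · intro hx
        obtain ⟨hx1, hlt⟩ := Finset.mem_filter.mp hx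
        obtain ⟨y, hy, rfl⟩ := Finset.mem_image.mp hx1
        obtain ⟨hne, hy2⟩ := Finset.mem_erase.mp hy
        obtain ⟨g, hg, rfl⟩ := Finset.mem_image.mp hy2
        have hxeq : f (g ⊔ z') = f g ⊔ f z' := hjoin g z'
        have hlt' : f z' < f (g ⊔ z') := hlt
        have hxw : f (g ⊔ z') ≠ f z' := fun he => absurd (he ▸ hlt') (lt_irrefl _)
        have hzg : f M.z < f g := by
          have h1 : f M.z ≤ f g := fmono f hjoin (M.lt_gens g hg).le
          rcases eq_or_lt_of_le h1 with he | hl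
          · exfalso
            apply hxw
            have h2 : f g ≤ f z' :=
              he ▸ fmono f hjoin (le_sup_right : M.z ≤ I.sup id ⊔ M.z)
            rw [hxeq]
            exact sup_eq_right.mpr h2
          · exact hl
        refine Finset.mem_erase.mpr ⟨?_, Finset.mem_image.mpr
          ⟨f g, Finset.mem_filter.mpr ⟨Finset.mem_image.mpr ⟨g, hg, rfl⟩, hzg⟩, ?_⟩⟩
        · rw [hz2]; exact hxw
        · rw [hz2]; exact hxeq.symm
      · intro hx
        obtain ⟨hne, hx2⟩ := Finset.mem_erase.mp hx
        obtain ⟨y, hy, rfl⟩ := Finset.mem_image.mp hx2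
        obtain ⟨hy1, hzy⟩ := Finset.mem_filter.mp hy
        obtain ⟨g, hg, rfl⟩ := Finset.mem_image.mp hy1
        rw [hz2] at hne ⊢
        rw [← hjoin]
        have hxw : f (g ⊔ z') ≠ f z' := by rw [hjoin]; exact hne
        refine Finset.mem_filter.mpr ⟨Finset.mem_image.mpr ⟨g ⊔ z', ?_, rfl⟩, ?_⟩
        · refine Finset.mem_erase.mpr ⟨?_, Finset.mem_image.mpr ⟨g, hg, rfl⟩⟩
          intro he
          apply hxw
          have hgz : g ≤ z' := (le_sup_left : g ≤ g ⊔ z').trans he.le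
          rw [hjoin, sup_eq_right.mpr (fmono f hjoin hgz)]
        · show f z' < f (g ⊔ z')
          exact lt_of_le_of_ne (fmono f hjoin (le_sup_right : z' ≤ g ⊔ z')) (Ne.symm hxw)

include hjoin in
theorem minor_map {M N : GEL L} (h : GEL.Minor M N) :
    GEL.Minor (GEL.map f M) (GEL.map f N) := by
  induction h with
  | refl => exact Relation.ReflTransGen.refl
  | tail _ hstep ih => exact ih.tail (step_map f hjoin hstep)

end StrongMapAux

/-- A strong map `f : (L,G) → (K,H)` (join-preserving with `f(G) ⊆ H ∪ {⊥}`)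
induces an order-preserving map of minor posets `F(⟨I|z⟩) = ⟨f(I)|f(z)⟩`
(and `F(∅) = ∅`): it carries minors of `(L,G)` to minors of `(K,H)` and
preserves the minor relation. -/


theorem strong_map_induces_orderPreserving {L K : Type*}
    [Lattice L] [OrderBot L] [DecidableEq L]
    [Lattice K] [OrderBot K] [DecidableEq K]
    (G : Finset L) (hG : ∀ g ∈ G, (⊥ : L) < g)
    (H : Finset K) (hH : ∀ h ∈ H, (⊥ : K) < h)
    (f : L → K) (hjoin : ∀ a b : L, f (a ⊔ b) = f a ⊔ f b) (hbot : f ⊥ = ⊥)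
    (hstrong : ∀ g ∈ G, f g ∈ H ∨ f g = ⊥) :
    (∀ M : GEL L, (GEL.ofGens G hG).Minor M →
      (GEL.ofGens H hH).Minor (GEL.map f M)) ∧
    (∀ M₁ M₂ : GEL L, (GEL.ofGens G hG).Minor M₂ → M₂.Minor M₁ →
      (GEL.map f M₂ : GEL K).Minor (GEL.map f M₁)) := by
  classical
  have base : (GEL.ofGens H hH).Minor (GEL.map f (GEL.ofGens G hG)) := by
    have hS : ((G.image f).filter fun y => (⊥ : K) < y) ⊆ H := by
      intro y hy
      obtain ⟨hy1, hy2⟩ := Finset.mem_filter.mp hy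
      obtain ⟨g, hg, rfl⟩ := Finset.mem_image.mp hy1
      rcases hstrong g hg with h | h
      · exact h
      · exact absurd (h ▸ hy2) (lt_irrefl _)
    refine Relation.ReflTransGen.single ⟨H \ ((G.image f).filter fun y => (⊥ : K) < y),
      Finset.sdiff_subset, Or.inl ?_⟩
    refine StrongMapAux.GEL.ext' ?_ ?_
    · show f ⊥ = (⊥ : K); exact hbot
    · show (GEL.map f (GEL.ofGens G hG)).gens = _
      simp only [GEL.map, GEL.ofGens, GEL.delete, hbot]
      rw [Finset.sdiff_sdiff_self_left, Finset.inter_eq_right.mpr hS]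
  refine ⟨fun M hM => base.trans (StrongMapAux.minor_map f hjoin hM),
    fun M₁ M₂ _ h => StrongMapAux.minor_map f hjoin h⟩
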